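/- Let x₁,…,xₙ be distinct complex numbers, k ∈ ℂ, and Y the matrix with Y_{ii} = k + ∑_{j≠i} 1/(x_i − x_j) and Y_{ik} = −1/(x_i − x_k) for i ≠ k. Then det(zI − Y) = (z − k)ⁿ, i.e. Y has k as its only eigenvalue with algebraic multiplicity n. -/
import Mathlib

open Matrix Finset

/-- The one-eigenvalue Calogero–Moser Lax matrix has characteristic polynomial
`(z - k)ⁿ`. -/
theorem CM_Lax_char_poly
    (n : ℕ) (x : Fin n → ℂ) (hx : Function.Injective x) (k : ℂ)
    (Y : Matrix (Fin n) (Fin n) ℂ)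
    (hY : Y = Matrix.of fun i j =>
      if i = j then k + ∑ l ∈ Finset.univ.erase i, (x i - x l)⁻¹
      else -(x i - x j)⁻¹) :
    ∀ z : ℂ, (z • (1 : Matrix (Fin n) (Fin n) ℂ) - Y).det = (z - k) ^ n := by
  intro z
  set p : ℕ → ℂ := fun s => ∑ j, x j ^ s with hp
  set N : Matrix (Fin n) (Fin n) ℂ := Matrix.of (fun a m =>
    if (a : ℕ) < (m : ℕ) then
      p ((m : ℕ) - 1 - (a : ℕ)) - (if (a : ℕ) + 1 = (m : ℕ) then ((m : ℕ) : ℂ) else 0)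
    else 0) with hN
  set P := Matrix.vandermonde x with hP
  set T : Matrix (Fin n) (Fin n) ℂ := (z - k) • (1 : Matrix (Fin n) (Fin n) ℂ) - N with hT
  have hPdet : P.det ≠ 0 := by
    rw [hP, Matrix.det_vandermonde]
    refine Finset.prod_ne_zero_iff.2 fun i _ => Finset.prod_ne_zero_iff.2 fun j hj => ?_
    have hij : i < j := Finset.mem_Ioi.1 hj
    exact sub_ne_zero.2 fun h => absurd (hx h) (Fin.ne_of_gt hij)
  -- key conjugation identity
  have key : (z • (1 : Matrix (Fin n) (Fin n) ℂ) - Y) * P = P * T := by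
    ext i m
    rw [Matrix.mul_apply, Matrix.mul_apply]
    have hxij : ∀ j : Fin n, j ≠ i → x i - x j ≠ 0 := fun j hj =>
      sub_ne_zero.2 fun h => hj (hx h.symm)
    -- LHS computation
    have hL : ∑ j, (z • (1 : Matrix (Fin n) (Fin n) ℂ) - Y) i j * P j m
        = (z - k) * x i ^ (m : ℕ)
          - ∑ j ∈ Finset.univ.erase i, (x i - x j)⁻¹ * (x i ^ (m : ℕ) - x j ^ (m : ℕ)) := by
      rw [← Finset.add_sum_erase _ _ (Finset.mem_univ i)]
      simp only [Matrix.sub_apply, Matrix.smul_apply, Matrix.one_apply, hY, Matrix.of_apply,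
        hP, Matrix.vandermonde_apply, smul_eq_mul, eq_self_iff_true, if_true]
      have hrw : ∀ j ∈ Finset.univ.erase i,
          ((z * if i = j then (1:ℂ) else 0) - if i = j then k + ∑ l ∈ Finset.univ.erase i, (x i - x l)⁻¹
            else -(x i - x j)⁻¹) * x j ^ (m:ℕ) = (x i - x j)⁻¹ * x j ^ (m:ℕ) := by
        intro j hj
        have hne : i ≠ j := ((Finset.mem_erase.1 hj).1).symm
        rw [if_neg hne, if_neg hne]
        ring
      rw [Finset.sum_congr rfl hrw]
      have hsplit : ∑ j ∈ Finset.univ.erase i, (x i - x j)⁻¹ * (x i ^ (m:ℕ) - x j ^ (m:ℕ))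
          = (∑ j ∈ Finset.univ.erase i, (x i - x j)⁻¹) * x i ^ (m:ℕ)
            - ∑ j ∈ Finset.univ.erase i, (x i - x j)⁻¹ * x j ^ (m:ℕ) := by
        rw [Finset.sum_mul, ← Finset.sum_sub_distrib]
        exact Finset.sum_congr rfl fun j _ => by ring
      rw [hsplit]
      ring
    rw [hL]
    -- RHS computation
    have hR : ∑ a : Fin n, P i a * T a m
        = (z - k) * x i ^ (m : ℕ) - ∑ a : Fin n, x i ^ (a : ℕ) * N a m := by
      have h1 : ∀ a : Fin n, P i a * T a m
          = (z - k) * (x i ^ (a : ℕ) * (1 : Matrix (Fin n) (Fin n) ℂ) a m)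
            - x i ^ (a : ℕ) * N a m := fun a => by
        rw [hT]
        simp only [Matrix.sub_apply, Matrix.smul_apply, hP, Matrix.vandermonde_apply,
          smul_eq_mul]
        ring
      rw [Finset.sum_congr rfl fun a _ => h1 a, Finset.sum_sub_distrib, ← Finset.mul_sum]
      congr 2
      simp [Matrix.one_apply, mul_ite]
    rw [hR]
    -- main identity
    congr 1
    -- each LHS term is a geometric sum
    have hgeom : ∀ j ∈ Finset.univ.erase i,
        (x i - x j)⁻¹ * (x i ^ (m:ℕ) - x j ^ (m:ℕ))
          = ∑ b ∈ Finset.range (m:ℕ), x i ^ b * x j ^ ((m:ℕ) - 1 - b) := by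
      intro j hj
      have hne := hxij j (Finset.mem_erase.1 hj).1
      rw [← geom_sum₂_mul (x i) (x j) (m:ℕ)]
      field_simp
    rw [Finset.sum_congr rfl hgeom, Finset.sum_comm]
    -- inner sums over j give power sums
    have hinner : ∀ b ∈ Finset.range (m:ℕ),
        ∑ j ∈ Finset.univ.erase i, x i ^ b * x j ^ ((m:ℕ) - 1 - b)
          = x i ^ b * (p ((m:ℕ) - 1 - b) - x i ^ ((m:ℕ) - 1 - b)) := by
      intro b _
      rw [← Finset.mul_sum, Finset.sum_erase_eq_sub (Finset.mem_univ i)]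
    rw [Finset.sum_congr rfl hinner]
    -- rewrite RHS as a sum over range m
    have hRHS : ∑ a : Fin n, x i ^ (a : ℕ) * N a m
        = ∑ b ∈ Finset.range (m:ℕ), x i ^ b *
            (p ((m:ℕ) - 1 - b) - (if b + 1 = (m:ℕ) then ((m:ℕ) : ℂ) else 0)) := by
      have h1 : ∑ a : Fin n, x i ^ (a : ℕ) * N a m
          = ∑ a ∈ Finset.range n, (if a < (m:ℕ) then
              x i ^ a * (p ((m:ℕ) - 1 - a) - (if a + 1 = (m:ℕ) then ((m:ℕ) : ℂ) else 0)) else 0) := by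
        rw [← Fin.sum_univ_eq_sum_range]
        refine Finset.sum_congr rfl fun a _ => ?_
        rw [hN]
        simp only [Matrix.of_apply]
        split <;> simp
      rw [h1, Finset.sum_ite, Finset.sum_const_zero, add_zero]
      refine Finset.sum_congr ?_ fun _ _ => rfl
      ext a
      simp only [Finset.mem_filter, Finset.mem_range]
      have := m.isLt
      omega
    rw [hRHS]
    -- compare: difference of the indicator vs power term
    rw [← sub_eq_zero, ← Finset.sum_sub_distrib]
    have hterm : ∀ b ∈ Finset.range (m:ℕ),
        x i ^ b * (p ((m:ℕ) - 1 - b) - x i ^ ((m:ℕ) - 1 - b))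
          - x i ^ b * (p ((m:ℕ) - 1 - b) - (if b + 1 = (m:ℕ) then ((m:ℕ) : ℂ) else 0))
        = (if b = (m:ℕ) - 1 then ((m:ℕ) : ℂ) * x i ^ b else 0) - x i ^ ((m:ℕ) - 1) := by
      intro b hb
      have hbm : b < (m:ℕ) := Finset.mem_range.1 hb
      have hpow : x i ^ b * x i ^ ((m:ℕ) - 1 - b) = x i ^ ((m:ℕ) - 1) := by
        rw [← pow_add]; congr 1; omega
      by_cases h : b + 1 = (m:ℕ)
      · rw [if_pos h, if_pos (show b = (m:ℕ) - 1 by omega),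
          show ((m:ℕ) - 1 - b) = 0 by omega]
        rw [show ((m:ℕ) - 1 - b) = 0 by omega] at hpow
        simp only [pow_zero, mul_one] at hpow
        rw [hpow]; ring
      · rw [if_neg h, if_neg (show ¬ b = (m:ℕ) - 1 by omega)]
        simp only [mul_sub, hpow]; ring
    rw [Finset.sum_congr rfl hterm, Finset.sum_sub_distrib, Finset.sum_const,
      Finset.card_range, Finset.sum_ite_eq' (Finset.range (m:ℕ)) ((m:ℕ) - 1)]
    rcases Nat.eq_zero_or_pos (m:ℕ) with hm | hm
    · simp [hm]
    · rw [if_pos (Finset.mem_range.2 (by omega))]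
      simp [nsmul_eq_mul]
  -- conclude via determinants
  have hdet : (z • (1 : Matrix (Fin n) (Fin n) ℂ) - Y).det * P.det = T.det * P.det := by
    rw [← Matrix.det_mul, key, Matrix.det_mul, mul_comm]
  have hdet2 : (z • (1 : Matrix (Fin n) (Fin n) ℂ) - Y).det = T.det :=
    mul_right_cancel₀ hPdet hdet
  rw [hdet2]
  have htri : T.BlockTriangular id := by
    intro a b hab
    rw [hT]
    simp only [Matrix.sub_apply, Matrix.smul_apply, Matrix.one_apply, hN, Matrix.of_apply]
    rw [if_neg (by exact fun h => absurd h (Fin.ne_of_gt hab)),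
      if_neg (by exact fun h => absurd hab (not_lt.2 (le_of_lt (by exact_mod_cast h))))]
    simp
  rw [Matrix.det_of_upperTriangular htri]
  have hdiag : ∀ a : Fin n, T a a = z - k := by
    intro a
    rw [hT]
    simp [Matrix.one_apply, hN]
  rw [Finset.prod_congr rfl fun a _ => hdiag a, Finset.prod_const, Finset.card_univ,
    Fintype.card_fin]
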